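/- arXiv:2107.13690 — 3 statements merged into one kernel-verified Lean document; each statement's English description precedes it below -/
import Mathlib

section
/- Let G be an almost simple group. Then the quotient group T(G) = NHol(G)/Hol(G) is cyclic of order 2. -/
/-- The left regular representation `λ : G →* Perm G`, `λ(σ)(x) = σ·x`. -/
def lambda (G : Type*) [Group G] : G →* Equiv.Perm G where
  toFun σ := Equiv.mulLeft σ
  map_one' := by ext x; simp
  map_mul' σ τ := by ext x; simp [mul_assoc]

/-- The right regular representation `ρ : G →* Perm G`, `ρ(σ)(x) = x·σ⁻¹`. -/
def rho (G : Type*) [Group G] : G →* Equiv.Perm G where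
  toFun σ := Equiv.mulRight σ⁻¹
  map_one' := by ext x; simp
  map_mul' σ τ := by ext x; simp [mul_assoc]

/-- The holomorph `Hol(G)`: the normalizer of `λ(G)` in `Perm G`. -/
def Hol (G : Type*) [Group G] : Subgroup (Equiv.Perm G) :=
  Subgroup.normalizer (((lambda G).range : Subgroup (Equiv.Perm G)) : Set (Equiv.Perm G))

/-- The multiple holomorph `NHol(G)`: the normalizer of `Hol(G)` in `Perm G`. -/
def NHol (G : Type*) [Group G] : Subgroup (Equiv.Perm G) :=
  Subgroup.normalizer ((Hol G : Subgroup (Equiv.Perm G)) : Set (Equiv.Perm G))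

instance holNormalInNHol (G : Type*) [Group G] :
    ((Hol G).subgroupOf (NHol G)).Normal :=
  Subgroup.normal_in_normalizer

/-- `T(G) = NHol(G) / Hol(G)`. -/
def THol (G : Type*) [Group G] : Type _ :=
  NHol G ⧸ (Hol G).subgroupOf (NHol G)

noncomputable instance (G : Type*) [Group G] : Group (THol G) :=
  QuotientGroup.Quotient.group _

section Helpers
variable {G : Type*} [Group G]

@[simp] lemma lambda_apply (g x : G) : lambda G g x = g * x := rfl
@[simp] lemma rho_apply (g x : G) : rho G g x = x * g⁻¹ := rfl

lemma lambda_injective : Function.Injective (lambda G) := fun a b h => by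
  simpa using congrArg (fun f : Equiv.Perm G => f 1) h

lemma rho_injective : Function.Injective (rho G) := fun a b h => by
  have := congrArg (fun f : Equiv.Perm G => f 1) h
  simp at this
  exact this

lemma lambda_rho_comm (g h : G) :
    lambda G g * rho G h = rho G h * lambda G g := by
  ext x; simp [Equiv.Perm.mul_apply, mul_assoc]

lemma mem_rho_range_of_commute (π : Equiv.Perm G)
    (h : ∀ g, π * lambda G g = lambda G g * π) : ∃ h : G, π = rho G h := by
  refine ⟨(π 1)⁻¹, ?_⟩
  ext x
  have := congrArg (fun f : Equiv.Perm G => f 1) (h x)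
  simp only [Equiv.Perm.mul_apply, lambda_apply, mul_one] at this
  simp only [rho_apply, inv_inv]
  exact this

lemma mem_lambda_range_of_commute (π : Equiv.Perm G)
    (h : ∀ g, π * rho G g = rho G g * π) : ∃ h : G, π = lambda G h := by
  refine ⟨π 1, ?_⟩
  ext x
  have := congrArg (fun f : Equiv.Perm G => f 1) (h x⁻¹)
  simp only [Equiv.Perm.mul_apply, rho_apply, one_mul, inv_inv] at this
  simp only [lambda_apply]
  exact this

lemma conj_aut_lambda (f : G ≃* G) (g : G) :
    (f.toEquiv : Equiv.Perm G) * lambda G g * (f.toEquiv : Equiv.Perm G)⁻¹ = lambda G (f g) := by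
  ext x
  simp [Equiv.Perm.mul_apply, Equiv.Perm.inv_def]

lemma aut_inv (f : G ≃* G) : (f.toEquiv : Equiv.Perm G)⁻¹ = f.symm.toEquiv := rfl

lemma lambda_mem_Hol (g : G) : lambda G g ∈ Hol G :=
  Subgroup.le_normalizer (H := (lambda G).range) ⟨g, rfl⟩

lemma aut_mem_Hol (f : G ≃* G) : (f.toEquiv : Equiv.Perm G) ∈ Hol G := by
  rw [Hol, Subgroup.mem_normalizer_iff]
  intro n
  constructor
  · rintro ⟨g, rfl⟩
    exact ⟨f g, (conj_aut_lambda f g).symm⟩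
  · rintro ⟨g, hg⟩
    refine ⟨f.symm g, ?_⟩
    have h2 : ((f.toEquiv : Equiv.Perm G)⁻¹ * lambda G g * ((f.toEquiv : Equiv.Perm G)⁻¹)⁻¹ : Equiv.Perm G)
        = lambda G (f.symm g) := conj_aut_lambda f.symm g
    rw [hg] at h2
    rw [← h2]; group

lemma rho_mem_Hol (g : G) : rho G g ∈ Hol G := by
  rw [Hol, Subgroup.mem_normalizer_iff]
  intro n
  constructor
  · rintro ⟨σ, rfl⟩
    refine ⟨σ, ?_⟩
    rw [← lambda_rho_comm]; group
  · rintro ⟨σ, hσ⟩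
    refine ⟨σ, ?_⟩
    have h1 : rho G g * lambda G σ * (rho G g)⁻¹ = lambda G σ := by
      rw [← lambda_rho_comm]; group
    exact mul_left_cancel (mul_right_cancel (h1.trans hσ))

lemma mem_Hol_iff {π : Equiv.Perm G} :
    π ∈ Hol G ↔ ∃ (g : G) (f : G ≃* G), π = lambda G g * (f.toEquiv : Equiv.Perm G) := by
  constructor
  · intro hπ
    rw [Hol, Subgroup.mem_normalizer_iff] at hπ
    have key : ∀ σ x : G, π (σ * x) = (π σ) * (π 1)⁻¹ * π x := by
      intro σ x
      obtain ⟨τ, hτ⟩ := (hπ (lambda G σ)).mp ⟨σ, rfl⟩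
      have h1 : ∀ y : G, π (σ * y) = τ * π y := by
        intro y
        have := congrArg (fun F : Equiv.Perm G => F (π y)) hτ
        simp only [Equiv.Perm.mul_apply, lambda_apply, Equiv.Perm.inv_def, Equiv.symm_apply_apply] at this
        exact this.symm
      have h2 : π σ = τ * π 1 := by simpa using h1 1
      rw [h1 x, h2]; group
    refine ⟨π 1, ⟨π.trans (Equiv.mulLeft (π 1)⁻¹), ?_⟩, ?_⟩
    · intro a b
      change (π 1)⁻¹ * π (a * b) = ((π 1)⁻¹ * π a) * ((π 1)⁻¹ * π b)
      rw [key a b]; group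
    · ext x
      change π x = π 1 * ((π 1)⁻¹ * π x)
      rw [mul_inv_cancel_left]
  · rintro ⟨g, f, rfl⟩
    exact mul_mem (lambda_mem_Hol g) (aut_mem_Hol f)

end Helpers

section Iot
variable {G : Type*} [Group G]

@[simp] lemma iot_apply (x : G) : (Equiv.inv G : Equiv.Perm G) x = x⁻¹ := rfl

lemma iot_inv : ((Equiv.inv G : Equiv.Perm G))⁻¹ = Equiv.inv G := rfl

lemma iot_mul_iot : (Equiv.inv G : Equiv.Perm G) * Equiv.inv G = 1 := by
  ext x; simp [Equiv.Perm.mul_apply]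

lemma iot_conj_lambda (g : G) :
    Equiv.inv G * lambda G g * (Equiv.inv G : Equiv.Perm G)⁻¹ = rho G g := by
  rw [iot_inv]; ext x; simp [Equiv.Perm.mul_apply, mul_inv_rev]

lemma iot_conj_rho (g : G) :
    Equiv.inv G * rho G g * (Equiv.inv G : Equiv.Perm G)⁻¹ = lambda G g := by
  rw [iot_inv]; ext x; simp [Equiv.Perm.mul_apply, mul_inv_rev]

lemma iot_conj_aut (f : G ≃* G) :
    Equiv.inv G * (f.toEquiv : Equiv.Perm G) * (Equiv.inv G : Equiv.Perm G)⁻¹ = f.toEquiv := by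
  rw [iot_inv]; ext x; simp [Equiv.Perm.mul_apply]

lemma iot_mem_NHol : (Equiv.inv G : Equiv.Perm G) ∈ NHol G := by
  have key : ∀ n ∈ Hol G, Equiv.inv G * n * (Equiv.inv G : Equiv.Perm G)⁻¹ ∈ Hol G := by
    intro n hn
    obtain ⟨g, f, rfl⟩ := mem_Hol_iff.mp hn
    have h1 : Equiv.inv G * (lambda G g * f.toEquiv) * (Equiv.inv G : Equiv.Perm G)⁻¹
        = (Equiv.inv G * lambda G g * (Equiv.inv G : Equiv.Perm G)⁻¹)
          * (Equiv.inv G * f.toEquiv * (Equiv.inv G : Equiv.Perm G)⁻¹) := by group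
    rw [h1, iot_conj_lambda, iot_conj_aut]
    exact mul_mem (rho_mem_Hol g) (aut_mem_Hol f)
  rw [NHol, Subgroup.mem_normalizer_iff]
  intro n
  constructor
  · exact key n
  · intro h
    have h2 := key _ h
    have h3 : Equiv.inv G * (Equiv.inv G * n * (Equiv.inv G : Equiv.Perm G)⁻¹) * (Equiv.inv G : Equiv.Perm G)⁻¹ = n := by
      rw [iot_inv]
      calc Equiv.inv G * (Equiv.inv G * n * Equiv.inv G) * Equiv.inv G
          = (Equiv.inv G * Equiv.inv G) * n * (Equiv.inv G * Equiv.inv G) := by group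
        _ = n := by rw [iot_mul_iot]; group
    rwa [h3] at h2

lemma iot_not_mem_Hol (hnc : ∃ a b : G, a * b ≠ b * a) : (Equiv.inv G : Equiv.Perm G) ∉ Hol G := by
  intro h
  obtain ⟨g, f, hf⟩ := mem_Hol_iff.mp h
  obtain ⟨a, b, hab⟩ := hnc
  have h1 : ((1 : G))⁻¹ = g * f 1 := congrArg (fun F : Equiv.Perm G => F 1) hf
  have hg : g = 1 := by simpa using h1.symm
  have hx : ∀ x : G, x⁻¹ = f x := by
    intro x
    have := congrArg (fun F : Equiv.Perm G => F x) hf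
    simpa [hg] using this
  have h2 := hx (a⁻¹ * b⁻¹)
  rw [map_mul, ← hx a⁻¹, ← hx b⁻¹, mul_inv_rev] at h2
  simp only [inv_inv] at h2
  exact hab h2.symm

end Iot

section Dichotomy
variable {G : Type*} [Group G]

lemma hol_dichotomy
    (B : Subgroup G) (hBn : B.Normal) (hBbot : B ≠ ⊥)
    (hBc : Subgroup.centralizer (B : Set G) = ⊥)
    (hBmin : ∀ M : Subgroup G, M.Normal → M ≠ ⊥ → B ≤ M)
    {π : Equiv.Perm G} (hπ : π ∈ NHol G) :
    π ∈ Hol G ∨ Equiv.inv G * π ∈ Hol G := by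
  classical
  have hlnorm : ∀ h ∈ Hol G, ∀ g : G, ∃ g', h * lambda G g * h⁻¹ = lambda G g' := by
    intro h hh g
    rw [Hol, Subgroup.mem_normalizer_iff] at hh
    obtain ⟨g', hg'⟩ := (hh (lambda G g)).mp ⟨g, rfl⟩
    exact ⟨g', hg'.symm⟩
  have hπmem : ∀ n : Equiv.Perm G, n ∈ Hol G ↔ π * n * π⁻¹ ∈ Hol G := by
    rw [NHol, Subgroup.mem_normalizer_iff] at hπ
    exact hπ
  have hπconj : ∀ h ∈ Hol G, π * h * π⁻¹ ∈ Hol G := fun h hh => (hπmem h).mp hh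
  have hπconj' : ∀ h ∈ Hol G, π⁻¹ * h * π ∈ Hol G := by
    intro h hh
    refine (hπmem (π⁻¹ * h * π)).mpr ?_
    have h1 : π * (π⁻¹ * h * π) * π⁻¹ = h := by group
    rwa [h1]
  set N : Subgroup (Equiv.Perm G) :=
    Subgroup.map ((MulAut.conj π).toMonoidHom) (lambda G).range with hNdef
  have hNmem : ∀ x, x ∈ N ↔ ∃ g, π * lambda G g * π⁻¹ = x := by
    intro x
    simp only [hNdef, Subgroup.mem_map, MonoidHom.mem_range]
    constructor
    · rintro ⟨y, ⟨g, rfl⟩, rfl⟩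
      exact ⟨g, by simp [MulAut.conj_apply]⟩
    · rintro ⟨g, rfl⟩
      exact ⟨lambda G g, ⟨g, rfl⟩, by simp [MulAut.conj_apply]⟩
  have hNle : ∀ x ∈ N, x ∈ Hol G := by
    intro x hx
    obtain ⟨g, rfl⟩ := (hNmem x).mp hx
    exact hπconj _ (lambda_mem_Hol g)
  have hNnormal : ∀ h ∈ Hol G, ∀ x ∈ N, h * x * h⁻¹ ∈ N := by
    intro h hh x hx
    obtain ⟨g, rfl⟩ := (hNmem x).mp hx
    obtain ⟨g', hg'⟩ := hlnorm _ (hπconj' h hh) g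
    refine (hNmem _).mpr ⟨g', ?_⟩
    rw [← hg']
    group
  have htrans : ∀ x : G, (π * lambda G (π⁻¹ x * (π⁻¹ 1)⁻¹) * π⁻¹) 1 = x := by
    intro x
    simp only [Equiv.Perm.mul_apply, lambda_apply]
    rw [mul_assoc, inv_mul_cancel, mul_one, Equiv.Perm.inv_def, Equiv.apply_symm_apply]
  by_cases hM : Subgroup.comap (lambda G) N = ⊥
  · -- N ∩ λ(G) = 1 : N = ρ(G), so inv ∘ π ∈ Hol
    right
    have hcomm : ∀ x ∈ N, ∀ g : G, x * lambda G g = lambda G g * x := by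
      intro x hx g
      have h1 : lambda G g * x⁻¹ * (lambda G g)⁻¹ ∈ N :=
        hNnormal _ (lambda_mem_Hol g) _ (N.inv_mem hx)
      have h2 : x * (lambda G g * x⁻¹ * (lambda G g)⁻¹) ∈ N := N.mul_mem hx h1
      obtain ⟨g', hg'⟩ := hlnorm x (hNle x hx) g
      have h3 : x * (lambda G g * x⁻¹ * (lambda G g)⁻¹) = lambda G (g' * g⁻¹) := by
        rw [map_mul, map_inv, ← hg']; group
      rw [h3] at h2
      have h4 : g' * g⁻¹ ∈ Subgroup.comap (lambda G) N := Subgroup.mem_comap.mpr h2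
      rw [hM, Subgroup.mem_bot] at h4
      have h5 : g' = g := by
        have := mul_eq_one_iff_eq_inv.mp h4
        simpa using this
      rw [h5] at hg'
      calc x * lambda G g = (x * lambda G g * x⁻¹) * x := by group
        _ = lambda G g * x := by rw [hg']
    have hNρ : ∀ x ∈ N, ∃ h : G, x = rho G h := fun x hx =>
      mem_rho_range_of_commute x (fun g => hcomm x hx g)
    have hρN : ∀ h : G, rho G h ∈ N := by
      intro h
      have hn : (π * lambda G (π⁻¹ h⁻¹ * (π⁻¹ 1)⁻¹) * π⁻¹) ∈ N := (hNmem _).mpr ⟨_, rfl⟩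
      obtain ⟨h', hh'⟩ := hNρ _ hn
      have h1 := htrans h⁻¹
      rw [hh'] at h1 hn
      simp only [rho_apply, one_mul] at h1
      rwa [inv_injective h1] at hn
    rw [Hol, Subgroup.mem_normalizer_iff]
    intro n
    constructor
    · rintro ⟨g, rfl⟩
      obtain ⟨h', hh'⟩ := hNρ _ ((hNmem _).mpr ⟨g, rfl⟩)
      refine ⟨h', ?_⟩
      have h1 : (Equiv.inv G * π) * lambda G g * (Equiv.inv G * π)⁻¹
          = Equiv.inv G * (π * lambda G g * π⁻¹) * (Equiv.inv G : Equiv.Perm G)⁻¹ := by group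
      rw [h1, hh', iot_conj_rho]
    · rintro ⟨g, hg⟩
      obtain ⟨g₁, hg₁⟩ := (hNmem _).mp (hρN g)
      refine ⟨g₁, ?_⟩
      -- hg : λ g = (ι π) n (ι π)⁻¹ ; hg₁ : π λ g₁ π⁻¹ = ρ g
      -- n = (ι π)⁻¹ λg (ι π) = π⁻¹ (ι λg ι⁻¹)... careful: (ι π)⁻¹ = π⁻¹ ι⁻¹
      have h2 : Equiv.inv G * rho G g * (Equiv.inv G : Equiv.Perm G)⁻¹ = lambda G g := iot_conj_rho g
      have h3 : lambda G g = Equiv.inv G * (π * lambda G g₁ * π⁻¹) * (Equiv.inv G : Equiv.Perm G)⁻¹ := by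
        rw [hg₁]; exact h2.symm
      rw [h3] at hg
      have h4 : (Equiv.inv G * π) * lambda G g₁ * ((Equiv.inv G * π))⁻¹
          = Equiv.inv G * (π * lambda G g₁ * π⁻¹) * (Equiv.inv G : Equiv.Perm G)⁻¹ := by group
      rw [← h4] at hg
      exact mul_left_cancel (mul_right_cancel hg)
  · -- N ∩ λ(G) ≠ 1 : N = λ(G), so π ∈ Hol
    left
    have hMnormal : (Subgroup.comap (lambda G) N).Normal := by
      constructor
      intro m hm g
      rw [Subgroup.mem_comap] at hm ⊢
      have h1 : lambda G (g * m * g⁻¹) = lambda G g * lambda G m * (lambda G g)⁻¹ := by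
        rw [map_mul, map_mul, map_inv]
      rw [h1]
      exact hNnormal _ (lambda_mem_Hol g) _ hm
    have hlBN : ∀ b ∈ B, lambda G b ∈ N := fun b hb =>
      Subgroup.mem_comap.mp (hBmin _ hMnormal hM hb)
    have hchar : ∀ (f : G ≃* G), ∀ b ∈ B, f b ∈ B := by
      intro f b hb
      have h1 : B ≤ B.map f.symm.toMonoidHom := by
        refine hBmin _ (hBn.map _ f.symm.surjective) ?_
        intro hbot
        rw [Subgroup.map_eq_bot_iff] at hbot
        rw [(MonoidHom.ker_eq_bot_iff _).mpr f.symm.injective] at hbot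
        exact hBbot (le_bot_iff.mp hbot)
      obtain ⟨b', hb', hbb⟩ := h1 hb
      have : f b = b' := by
        rw [← hbb]
        exact f.apply_symm_apply b'
      rwa [this]
    have hlBnorm : ∀ h ∈ Hol G, ∀ b ∈ B, ∃ b' ∈ B, h * lambda G b * h⁻¹ = lambda G b' := by
      intro h hh b hb
      obtain ⟨g, f, rfl⟩ := mem_Hol_iff.mp hh
      refine ⟨g * f b * g⁻¹, hBn.conj_mem _ (hchar f b hb) g, ?_⟩
      have h1 := conj_aut_lambda f b
      calc (lambda G g * f.toEquiv) * lambda G b * (lambda G g * f.toEquiv)⁻¹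
          = lambda G g * (f.toEquiv * lambda G b * (f.toEquiv : Equiv.Perm G)⁻¹) * (lambda G g)⁻¹ := by
            group
        _ = lambda G g * lambda G (f b) * (lambda G g)⁻¹ := by rw [h1]
        _ = lambda G (g * f b * g⁻¹) := by rw [map_mul, map_mul, map_inv]
    -- π λ b π⁻¹ ∈ λ(B)
    have hπB : ∀ b ∈ B, ∃ b' ∈ B, π * lambda G b * π⁻¹ = lambda G b' := by
      set M' : Subgroup G := Subgroup.comap (lambda G)
        (Subgroup.comap ((MulAut.conj π).toMonoidHom) (B.map (lambda G))) with hM'def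
      have hM'mem : ∀ g : G, g ∈ M' ↔ ∃ b ∈ B, lambda G b = π * lambda G g * π⁻¹ := by
        intro g
        simp only [hM'def, Subgroup.mem_comap, Subgroup.mem_map, MulEquiv.coe_toMonoidHom,
          MulAut.conj_apply]
      have hM'normal : M'.Normal := by
        constructor
        intro m hm g
        obtain ⟨b, hb, hbe⟩ := (hM'mem m).mp hm
        obtain ⟨b', hb', he⟩ := hlBnorm _ (hπconj _ (lambda_mem_Hol g)) b hb
        refine (hM'mem _).mpr ⟨b', hb', ?_⟩
        have hx : π * lambda G (g * m * g⁻¹) * π⁻¹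
            = (π * lambda G g * π⁻¹) * (π * lambda G m * π⁻¹) * (π * lambda G g * π⁻¹)⁻¹ := by
          rw [map_mul, map_mul, map_inv]; group
        rw [hx, ← hbe]
        exact he.symm
      have hM'bot : M' ≠ ⊥ := by
        obtain ⟨⟨b₀, hb₀⟩, hb₀1⟩ := Subgroup.ne_bot_iff_exists_ne_one.mp hBbot
        have hb₀1' : b₀ ≠ 1 := fun hh => hb₀1 (Subtype.ext hh)
        obtain ⟨g₀, hg₀⟩ := (hNmem _).mp (hlBN b₀ hb₀)
        intro hbot
        have hg₀M : g₀ ∈ M' := (hM'mem g₀).mpr ⟨b₀, hb₀, hg₀.symm⟩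
        rw [hbot, Subgroup.mem_bot] at hg₀M
        rw [hg₀M] at hg₀
        simp only [map_one, mul_one] at hg₀
        rw [mul_inv_cancel] at hg₀
        exact hb₀1' (lambda_injective (by rw [← hg₀, map_one])).symm
      intro b hb
      obtain ⟨b', hb', he⟩ := (hM'mem b).mp (hBmin _ hM'normal hM'bot hb)
      exact ⟨b', hb', he.symm⟩
    -- the centralizer subgroup C' = C(λB) ⊓ Hol
    set C' : Subgroup (Equiv.Perm G) :=
      Subgroup.centralizer ((B.map (lambda G) : Subgroup (Equiv.Perm G)) : Set (Equiv.Perm G)) ⊓ Hol G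
      with hC'def
    have hC'mem : ∀ z, z ∈ C' ↔ (∀ b ∈ B, lambda G b * z = z * lambda G b) ∧ z ∈ Hol G := by
      intro z
      rw [hC'def, Subgroup.mem_inf, Subgroup.mem_centralizer_iff]
      constructor
      · rintro ⟨h1, h2⟩
        exact ⟨fun b hb => h1 _ (Subgroup.mem_map.mpr ⟨b, hb, rfl⟩), h2⟩
      · rintro ⟨h1, h2⟩
        refine ⟨?_, h2⟩
        rintro y hy
        obtain ⟨b, hb, rfl⟩ := Subgroup.mem_map.mp hy
        exact h1 b hb
    have hρC' : ∀ h : G, rho G h ∈ C' := by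
      intro h
      exact (hC'mem _).mpr ⟨fun b _ => lambda_rho_comm b h, rho_mem_Hol h⟩
    have hC'normal : ∀ h ∈ Hol G, ∀ z ∈ C', h * z * h⁻¹ ∈ C' := by
      intro h hh z hz
      obtain ⟨hz1, hz2⟩ := (hC'mem z).mp hz
      refine (hC'mem _).mpr ⟨?_, mul_mem (mul_mem hh hz2) (inv_mem hh)⟩
      intro b hb
      obtain ⟨b', hb', he⟩ := hlBnorm h⁻¹ (inv_mem hh) b hb
      -- he : h⁻¹ * λb * h⁻¹⁻¹ = λ b'
      rw [inv_inv] at he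
      calc lambda G b * (h * z * h⁻¹)
          = h * ((h⁻¹ * lambda G b * h) * z) * h⁻¹ := by group
        _ = h * (lambda G b' * z) * h⁻¹ := by rw [he]
        _ = h * (z * lambda G b') * h⁻¹ := by rw [hz1 b' hb']
        _ = h * z * ((h⁻¹ * lambda G b * h) * h⁻¹) := by rw [he]; group
        _ = (h * z * h⁻¹) * lambda G b := by group
    have hNC' : ∀ y ∈ N, y ∈ C' → y = 1 := by
      intro y hyN hyC
      obtain ⟨g, rfl⟩ := (hNmem y).mp hyN
      have hg1 : g ∈ Subgroup.centralizer (B : Set G) := by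
        rw [Subgroup.mem_centralizer_iff]
        intro b hb
        obtain ⟨b', hb', he⟩ := hπB b hb
        have h1 := ((hC'mem _).mp hyC).1 b' hb'
        rw [← he] at h1
        have h2 : π * lambda G (b * g) * π⁻¹ = π * lambda G (g * b) * π⁻¹ := by
          rw [map_mul, map_mul]
          calc π * (lambda G b * lambda G g) * π⁻¹
              = (π * lambda G b * π⁻¹) * (π * lambda G g * π⁻¹) := by group
            _ = (π * lambda G g * π⁻¹) * (π * lambda G b * π⁻¹) := h1
            _ = π * (lambda G g * lambda G b) * π⁻¹ := by group
        exact lambda_injective (mul_left_cancel (mul_right_cancel h2))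
      rw [hBc, Subgroup.mem_bot] at hg1
      rw [hg1]
      simp
    have hNcomm : ∀ x ∈ N, ∀ h : G, x * rho G h = rho G h * x := by
      intro x hx h
      have hy1 : x * (rho G h * x⁻¹ * (rho G h)⁻¹) ∈ N :=
        N.mul_mem hx (hNnormal _ (rho_mem_Hol h) _ (N.inv_mem hx))
      have hy2 : x * (rho G h * x⁻¹ * (rho G h)⁻¹) ∈ C' := by
        have h1 : x * rho G h * x⁻¹ ∈ C' := hC'normal _ (hNle x hx) _ (hρC' h)
        have h2 : x * (rho G h * x⁻¹ * (rho G h)⁻¹) = (x * rho G h * x⁻¹) * (rho G h)⁻¹ := by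
          group
        rw [h2]
        exact mul_mem h1 (inv_mem (hρC' h))
      have h3 := hNC' _ hy1 hy2
      have h4 : x * (rho G h * x⁻¹ * (rho G h)⁻¹) = 1 → x * rho G h = rho G h * x := by
        intro hp
        calc x * rho G h = (x * (rho G h * x⁻¹ * (rho G h)⁻¹)) * (rho G h * x) := by group
          _ = rho G h * x := by rw [hp, one_mul]
      exact h4 h3
    have hNl : ∀ x ∈ N, ∃ h : G, x = lambda G h := fun x hx =>
      mem_lambda_range_of_commute x (fun h => hNcomm x hx h)
    have hlN : ∀ g : G, lambda G g ∈ N := by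
      intro g
      have hn : (π * lambda G (π⁻¹ g * (π⁻¹ 1)⁻¹) * π⁻¹) ∈ N := (hNmem _).mpr ⟨_, rfl⟩
      obtain ⟨g₁, hg₁⟩ := hNl _ hn
      have h1 := htrans g
      rw [hg₁] at h1 hn
      simp only [lambda_apply, mul_one] at h1
      rwa [h1] at hn
    rw [Hol, Subgroup.mem_normalizer_iff]
    intro n
    constructor
    · rintro ⟨g, rfl⟩
      obtain ⟨h', hh'⟩ := hNl _ ((hNmem _).mpr ⟨g, rfl⟩)
      exact ⟨h', hh'.symm⟩
    · rintro ⟨g, hg⟩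
      obtain ⟨g₁, hg₁⟩ := (hNmem _).mp (hlN g)
      refine ⟨g₁, ?_⟩
      rw [← hg₁] at hg
      exact mul_left_cancel (mul_right_cancel hg)

end Dichotomy

/-- If `G` is an almost simple group (i.e. `G` is isomorphic to a
subgroup `H` of `Aut(A)` containing `Inn(A)`, for some non-abelian simple group `A`),
then `T(G) = NHol(G)/Hol(G)` is cyclic of order `2`. -/
theorem T_of_almost_simple_is_cyclic_of_order_two
    (G : Type*) [Group G]
    (A : Type*) [Group A] [IsSimpleGroup A] (hA : ∃ a b : A, a * b ≠ b * a)
    (H : Subgroup (MulAut A)) (hInn : (MulAut.conj : A →* MulAut A).range ≤ H)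
    (e : G ≃* H) :
    IsCyclic (THol G) ∧ Nat.card (THol G) = 2 := by
  classical
  -- center of A is trivial
  have hZA : Subgroup.center A = ⊥ := by
    rcases IsSimpleGroup.eq_bot_or_eq_top_of_normal (Subgroup.center A)
      (by infer_instance) with h | h
    · exact h
    · obtain ⟨a, b, hab⟩ := hA
      exact absurd ((Subgroup.mem_center_iff.mp (h ▸ Subgroup.mem_top a)) b) (Ne.symm hab)
  have hZA' : ∀ a : A, (∀ x : A, x * a = a * x) → a = 1 := by
    intro a ha
    have : a ∈ Subgroup.center A := Subgroup.mem_center_iff.mpr ha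
    rwa [hZA, Subgroup.mem_bot] at this
  have hconj_inj : Function.Injective (MulAut.conj : A →* MulAut A) := by
    intro a b hab
    have h1 : ∀ x : A, a * x * a⁻¹ = b * x * b⁻¹ := by
      intro x
      have := congrArg (fun f : MulAut A => f x) hab
      simpa [MulAut.conj_apply] using this
    have h2 : ∀ x : A, x * (b⁻¹ * a) = (b⁻¹ * a) * x := by
      intro x
      calc x * (b⁻¹ * a) = b⁻¹ * (b * x * b⁻¹) * a := by group
        _ = b⁻¹ * (a * x * a⁻¹) * a := by rw [h1 x]
        _ = (b⁻¹ * a) * x := by group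
    have h3 : b⁻¹ * a = 1 := hZA' _ h2
    exact (inv_mul_eq_one.mp h3).symm
  -- φ : G →* MulAut A
  set φ : G →* MulAut A := H.subtype.comp e.toMonoidHom with hφdef
  have hφ_inj : Function.Injective φ := by
    intro x y hxy
    exact e.injective (Subtype.ext hxy)
  have hφ_surj : ∀ a : A, ∃ g : G, φ g = MulAut.conj a := by
    intro a
    refine ⟨e.symm ⟨MulAut.conj a, hInn ⟨a, rfl⟩⟩, ?_⟩
    simp [hφdef]
  -- the socle B
  set B : Subgroup G := Subgroup.comap φ (MulAut.conj : A →* MulAut A).range with hBdef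
  have hBmem : ∀ g : G, g ∈ B ↔ ∃ a : A, MulAut.conj a = φ g := by
    intro g; simp [hBdef, Subgroup.mem_comap, MonoidHom.mem_range]
  have hInn_norm : ∀ (f : MulAut A) (a : A), f * MulAut.conj a * f⁻¹ = MulAut.conj (f a) := by
    intro f a
    ext x
    simp [MulAut.conj_apply, map_mul]
  have hBn : B.Normal := by
    constructor
    intro b hb g
    obtain ⟨a, ha⟩ := (hBmem b).mp hb
    refine (hBmem _).mpr ⟨φ g a, ?_⟩
    rw [← hInn_norm (φ g) a, ha]
    simp [map_mul]
  have hBbot : B ≠ ⊥ := by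
    obtain ⟨a, b, hab⟩ := hA
    have hane : MulAut.conj a ≠ 1 := by
      intro h
      apply hab
      have := congrArg (fun f : MulAut A => f b) h
      simp only [MulAut.conj_apply, MulAut.one_apply] at this
      calc a * b = (a * b * a⁻¹) * a := by group
        _ = b * a := by rw [this]
    obtain ⟨g, hg⟩ := hφ_surj a
    intro hbot
    have hgB : g ∈ B := (hBmem g).mpr ⟨a, hg.symm⟩
    rw [hbot, Subgroup.mem_bot] at hgB
    rw [hgB, map_one] at hg
    exact hane hg.symm
  have hBc : Subgroup.centralizer (B : Set G) = ⊥ := by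
    rw [eq_bot_iff]
    intro g hg
    rw [Subgroup.mem_centralizer_iff] at hg
    rw [Subgroup.mem_bot]
    -- φ g commutes with all conj a
    have h1 : ∀ a : A, φ g * MulAut.conj a = MulAut.conj a * φ g := by
      intro a
      obtain ⟨b, hb⟩ := hφ_surj a
      have hbB : b ∈ B := (hBmem b).mpr ⟨a, hb.symm⟩
      have := hg b hbB   -- b * g = g * b
      rw [← hb, ← map_mul, ← map_mul, this]
    have h2 : ∀ a : A, φ g a = a := by
      intro a
      have := h1 a
      have h3 : φ g * MulAut.conj a * (φ g)⁻¹ = MulAut.conj a := by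
        rw [this]; group
      rw [hInn_norm] at h3
      have h4 : ∀ x : A, x * ((φ g a)⁻¹ * a)⁻¹ = ((φ g a)⁻¹ * a)⁻¹ * x := by
        intro x
        have h5 := congrArg (fun f : MulAut A => f x) h3
        simp only [MulAut.conj_apply] at h5
        calc x * ((φ g a)⁻¹ * a)⁻¹ = x * a⁻¹ * φ g a := by group
          _ = a⁻¹ * (a * x * a⁻¹) * φ g a := by group
          _ = a⁻¹ * (φ g a * x * (φ g a)⁻¹) * φ g a := by rw [h5]
          _ = ((φ g a)⁻¹ * a)⁻¹ * x := by group
      have h6 := hZA' _ fun x => (h4 x)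
      exact inv_mul_eq_one.mp (inv_eq_one.mp h6)
    have h7 : φ g = 1 := by
      ext x
      simp [h2 x]
    exact hφ_inj (by rw [h7, map_one])
  have hBmin : ∀ M : Subgroup G, M.Normal → M ≠ ⊥ → B ≤ M := by
    intro M hMn hMbot
    -- first : M ⊓ B ≠ ⊥
    have hMB : M ⊓ B ≠ ⊥ := by
      intro hbot
      apply hMbot
      rw [eq_bot_iff]
      intro m hm
      rw [Subgroup.mem_bot]
      have hmc : m ∈ Subgroup.centralizer (B : Set G) := by
        rw [Subgroup.mem_centralizer_iff]
        intro b hb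
        have hcomm : b * m * b⁻¹ * m⁻¹ ∈ M ⊓ B := by
          constructor
          · have h1 : b * m * b⁻¹ ∈ M := hMn.conj_mem m hm b
            have h2 : b * m * b⁻¹ * m⁻¹ = (b * m * b⁻¹) * m⁻¹ := by group
            rw [h2]
            exact M.mul_mem h1 (M.inv_mem hm)
          · have h1 : m * b⁻¹ * m⁻¹ ∈ B := hBn.conj_mem b⁻¹ (B.inv_mem hb) m
            have h2 : b * m * b⁻¹ * m⁻¹ = b * (m * b⁻¹ * m⁻¹) := by group
            rw [h2]
            exact B.mul_mem hb h1
        rw [hbot, Subgroup.mem_bot] at hcomm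
        calc b * m = (b * m * b⁻¹ * m⁻¹) * (m * b) := by group
          _ = m * b := by rw [hcomm, one_mul]
      rw [hBc, Subgroup.mem_bot] at hmc
      exact hmc
    -- K := preimage in A of φ(M ⊓ B)
    set K : Subgroup A := Subgroup.comap (MulAut.conj : A →* MulAut A)
      (Subgroup.map φ (M ⊓ B)) with hKdef
    have hKmem : ∀ a : A, a ∈ K ↔ ∃ m ∈ M ⊓ B, φ m = MulAut.conj a := by
      intro a; simp [hKdef, Subgroup.mem_comap, Subgroup.mem_map]
    have hKn : K.Normal := by
      constructor
      intro a ha x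
      obtain ⟨m, hm, hφm⟩ := (hKmem a).mp ha
      obtain ⟨gx, hgx⟩ := hφ_surj x
      refine (hKmem _).mpr ⟨gx * m * gx⁻¹, ?_, ?_⟩
      · constructor
        · exact hMn.conj_mem m hm.1 gx
        · exact hBn.conj_mem m hm.2 gx
      · rw [map_mul, map_mul, map_inv, hgx, hφm, hInn_norm, MulAut.conj_apply]
    have hKbot : K ≠ ⊥ := by
      obtain ⟨⟨m₀, hm₀⟩, hm₀1⟩ := Subgroup.ne_bot_iff_exists_ne_one.mp hMB
      have hm₀1' : m₀ ≠ 1 := fun hh => hm₀1 (Subtype.ext hh)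
      obtain ⟨a₀, ha₀⟩ := (hBmem m₀).mp hm₀.2
      intro hbot
      have ha₀K : a₀ ∈ K := (hKmem a₀).mpr ⟨m₀, hm₀, ha₀.symm⟩
      rw [hbot, Subgroup.mem_bot] at ha₀K
      rw [ha₀K, map_one] at ha₀
      exact hm₀1' (hφ_inj (by rw [← ha₀, map_one]))
    have hKtop : K = ⊤ := by
      rcases IsSimpleGroup.eq_bot_or_eq_top_of_normal K hKn with h | h
      · exact absurd h hKbot
      · exact h
    intro b hb
    obtain ⟨a, ha⟩ := (hBmem b).mp hb
    have haK : a ∈ K := hKtop ▸ Subgroup.mem_top a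
    obtain ⟨m, hm, hφm⟩ := (hKmem a).mp haK
    have : m = b := hφ_inj (by rw [hφm, ha])
    exact this ▸ hm.1
  -- noncommuting pair in G
  have hGnc : ∃ x y : G, x * y ≠ y * x := by
    obtain ⟨a, b, hab⟩ := hA
    obtain ⟨x, hx⟩ := hφ_surj a
    obtain ⟨y, hy⟩ := hφ_surj b
    refine ⟨x, y, ?_⟩
    intro hxy
    apply hab
    have h1 : MulAut.conj (a * b) = MulAut.conj (b * a) := by
      rw [map_mul, map_mul, ← hx, ← hy, ← map_mul, ← map_mul, hxy]
    exact hconj_inj h1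
  -- Now the quotient
  have hdich := fun (π : Equiv.Perm G) (hπ : π ∈ NHol G) =>
    hol_dichotomy B hBn hBbot hBc hBmin hπ
  have hiotN : (Equiv.inv G : Equiv.Perm G) ∈ NHol G := iot_mem_NHol
  set t : THol G := QuotientGroup.mk (⟨Equiv.inv G, hiotN⟩ : NHol G) with htdef
  have ht1 : t ≠ 1 := by
    intro h
    rw [htdef] at h
    change ((⟨Equiv.inv G, hiotN⟩ : NHol G) : NHol G ⧸ (Hol G).subgroupOf (NHol G)) = 1 at h
    rw [QuotientGroup.eq_one_iff] at h
    rw [Subgroup.mem_subgroupOf] at h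
    exact iot_not_mem_Hol hGnc h
  have hcases : ∀ x : THol G, x = 1 ∨ x = t := by
    intro x
    refine QuotientGroup.induction_on x ?_
    rintro ⟨π, hπ⟩
    rcases hdich π hπ with h | h
    · left
      change ((⟨π, hπ⟩ : NHol G) : NHol G ⧸ (Hol G).subgroupOf (NHol G)) = 1
      rw [QuotientGroup.eq_one_iff]
      rwa [Subgroup.mem_subgroupOf]
    · right
      rw [htdef]
      change ((⟨π, hπ⟩ : NHol G) : NHol G ⧸ (Hol G).subgroupOf (NHol G))
        = ((⟨Equiv.inv G, hiotN⟩ : NHol G) : NHol G ⧸ (Hol G).subgroupOf (NHol G))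
      rw [QuotientGroup.eq]
      rw [Subgroup.mem_subgroupOf]
      show (⟨π, hπ⟩ : NHol G)⁻¹.1 * Equiv.inv G ∈ Hol G
      show π⁻¹ * Equiv.inv G ∈ Hol G
      have h2 : π⁻¹ * Equiv.inv G = (Equiv.inv G * π)⁻¹ * (Equiv.inv G * Equiv.inv G) := by
        group
      rw [h2, iot_mul_iot, mul_one]
      exact inv_mem h
  have hcard : Nat.card (THol G) = 2 := by
    rw [Nat.card_eq_two_iff]
    refine ⟨1, t, Ne.symm ht1, ?_⟩
    ext x
    simp only [Set.mem_insert_iff, Set.mem_singleton_iff, Set.mem_univ, iff_true]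
    rcases hcases x with h | h
    · left; exact h
    · right; exact h
  exact ⟨isCyclic_of_prime_card (p := 2) hcard, hcard⟩
end

section
/- In the setup (G centerless, f, h : G → Aut(G) with h(σ) = conj(g(σ))∘f(σ), g a bijection satisfying g(στ) = g(σ)·f(σ)(g(τ)), and N = {ρ(g(σ))∘f(σ) : σ ∈ G} a normal subgroup of Hol(G)), the set {f(σ)h(σ) : σ ∈ G} is a normal subgroup of Aut(G), and the map σ ↦ f(σ)h(σ) is an isomorphism from G onto this subgroup. -/
/-- In the setup, the set `{f(σ)h(σ) : σ ∈ G}` is a normal subgroup of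
`Aut(G)` and `σ ↦ f(σ)h(σ)` is an isomorphism of `G` onto it. -/
theorem fh_is_normal_subgroup_iso_to_G
    (G : Type*) [Group G] (hZ : Subgroup.center G = ⊥)
    (f h : G →* MulAut G) (g : Equiv.Perm G) (hg1 : g 1 = 1)
    (hrel : ∀ σ τ : G, g (σ * τ) = g σ * (f σ) (g τ))
    (hh : ∀ σ : G, h σ = MulAut.conj (g σ) * f σ)
    (N : Subgroup (Equiv.Perm G))
    (hN : (N : Set (Equiv.Perm G))
      = {q | ∃ σ : G, q = rho G (g σ) * MulAut.toPerm G (f σ)})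
    (hNle : N ≤ Hol G)
    (hNnorm : ∀ x ∈ Hol G, ∀ n ∈ N, x * n * x⁻¹ ∈ N)
    :
    ∃ P : Subgroup (MulAut G),
      (P : Set (MulAut G)) = Set.range (fun σ : G => f σ * h σ) ∧ P.Normal ∧
      ∃ e : G ≃* ↥P, ∀ σ : G, (e σ : MulAut G) = f σ * h σ := by
  -- basic application lemmas
  have lam_app : ∀ a x : G, lambda G a x = a * x := fun a x => rfl
  have rho_app : ∀ a x : G, rho G a x = x * a⁻¹ := fun a x => rfl
  have lam_inv_app : ∀ a x : G, (lambda G a)⁻¹ x = a⁻¹ * x := by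
    intro a x; rw [← map_inv]; rfl
  have rho_inv_app : ∀ a x : G, (rho G a)⁻¹ x = x * a := by
    intro a x; rw [← map_inv]; simp [rho]
  have n_app : ∀ (τ : G) (x : G),
      (rho G (g τ) * MulAut.toPerm G (f τ)) x = f τ x * (g τ)⁻¹ := fun τ x => rfl
  have n_inv_app : ∀ (τ : G) (x : G),
      (rho G (g τ) * MulAut.toPerm G (f τ))⁻¹ x = (f τ)⁻¹ (x * g τ) := by
    intro τ x
    rw [mul_inv_rev, ← map_inv (MulAut.toPerm G) (f τ), ← map_inv (rho G) (g τ)]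
    show (f τ)⁻¹ (x * (g τ)⁻¹⁻¹) = _
    rw [inv_inv]
  have hmem : ∀ q : Equiv.Perm G,
      q ∈ N ↔ ∃ σ, q = rho G (g σ) * MulAut.toPerm G (f σ) := by
    intro q
    rw [← SetLike.mem_coe, hN]
    rfl
  have hnmem : ∀ σ : G, rho G (g σ) * MulAut.toPerm G (f σ) ∈ N :=
    fun σ => (hmem _).2 ⟨σ, rfl⟩
  -- extraction lemma
  have extract : ∀ q ∈ N, ∀ (b : G) (β : MulAut G),
      (∀ x, q x = β x * b⁻¹) → ∃ σ, g σ = b ∧ f σ = β := by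
    intro q hq b β hx
    obtain ⟨σ, rfl⟩ := (hmem q).1 hq
    have h1 := hx 1
    rw [n_app, map_one, map_one, one_mul, one_mul] at h1
    have hgb : g σ = b := inv_injective h1
    refine ⟨σ, hgb, ?_⟩
    ext x
    have h2 := hx x
    rw [n_app, hgb] at h2
    exact mul_right_cancel h2
  -- membership in Hol
  have memHol : ∀ x : Equiv.Perm G,
      (∀ b, ∃ c, x * lambda G b * x⁻¹ = lambda G c) →
      (∀ b, ∃ c, x⁻¹ * lambda G b * x = lambda G c) → x ∈ Hol G := by
    intro x h1 h2
    rw [Hol, Subgroup.mem_normalizer_iff]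
    intro p
    constructor
    · rintro ⟨b, rfl⟩
      obtain ⟨c, hc⟩ := h1 b
      exact ⟨c, hc.symm⟩
    · rintro ⟨b, hb⟩
      obtain ⟨c, hc⟩ := h2 b
      refine ⟨c, ?_⟩
      rw [← hc, hb]
      group
  have lamHol : ∀ a : G, lambda G a ∈ Hol G := fun a => Subgroup.le_normalizer (H := (lambda G).range) ⟨a, rfl⟩
  have rhoHol : ∀ a : G, rho G a ∈ Hol G := by
    intro a
    have key : ∀ (a b : G), rho G a * lambda G b * (rho G a)⁻¹ = lambda G b := by
      intro a b
      ext x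
      rw [Equiv.Perm.mul_apply, Equiv.Perm.mul_apply, rho_inv_app, lam_app, rho_app, lam_app,
        mul_assoc]
      group
    apply memHol
    · intro b; exact ⟨b, key a b⟩
    · intro b
      refine ⟨b, ?_⟩
      have := key a⁻¹ b
      rw [map_inv, inv_inv] at this
      exact this
  have autHol : ∀ α : MulAut G, MulAut.toPerm G α ∈ Hol G := by
    have key : ∀ (β : MulAut G) (b : G),
        MulAut.toPerm G β * lambda G b * (MulAut.toPerm G β)⁻¹ = lambda G (β b) := by
      intro β b
      ext x
      rw [Equiv.Perm.mul_apply, Equiv.Perm.mul_apply, ← map_inv (MulAut.toPerm G) β, lam_app,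
        lam_app]
      show β (b * β⁻¹ x) = β b * x
      rw [map_mul]
      simp
    intro α
    apply memHol
    · intro b; exact ⟨α b, key α b⟩
    · intro b
      refine ⟨α⁻¹ b, ?_⟩
      have := key α⁻¹ b
      rw [map_inv, inv_inv] at this
      exact this
  -- key consequences of normality
  have L3 : ∀ (α : MulAut G) (σ : G), ∃ σ', g σ' = α (g σ) ∧ f σ' = α * f σ * α⁻¹ := by
    intro α σ
    have hc : MulAut.toPerm G α * (rho G (g σ) * MulAut.toPerm G (f σ)) *
        (MulAut.toPerm G α)⁻¹ ∈ N := hNnorm _ (autHol α) _ (hnmem σ)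
    apply extract _ hc
    intro x
    rw [Equiv.Perm.mul_apply, Equiv.Perm.mul_apply, ← map_inv (MulAut.toPerm G) α, n_app]
    show α (f σ (α⁻¹ x) * (g σ)⁻¹) = (α * f σ * α⁻¹) x * (α (g σ))⁻¹
    rw [map_mul, map_inv]
    rfl
  have L1 : ∀ (τ a : G), ∃ κ, h κ = 1 ∧ g κ = a * (f τ a)⁻¹ := by
    intro τ a
    have hcN : (rho G (g τ) * MulAut.toPerm G (f τ)) * (lambda G a * (rho G (g τ) * MulAut.toPerm G (f τ))⁻¹ * (lambda G a)⁻¹) ∈ N :=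
      N.mul_mem (hnmem τ) (hNnorm _ (lamHol a) _ (N.inv_mem (hnmem τ)))
    have hpt : ∀ x, ((rho G (g τ) * MulAut.toPerm G (f τ)) * (lambda G a * (rho G (g τ) * MulAut.toPerm G (f τ))⁻¹ * (lambda G a)⁻¹)) x
        = (MulAut.conj (f τ a * a⁻¹)) x * (a * (f τ a)⁻¹)⁻¹ := by
      intro x
      simp only [Equiv.Perm.mul_apply]
      rw [lam_inv_app, n_inv_app, lam_app]
      show f τ (a * (f τ)⁻¹ (a⁻¹ * x * g τ)) * (g τ)⁻¹ = _
      rw [map_mul]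
      simp only [map_mul, map_inv, MulAut.apply_inv_self, MulAut.conj_apply, MulAut.mul_apply, MulAut.conj_inv_apply]
      group
    obtain ⟨σ, hgσ, hfσ⟩ := extract _ hcN (a * (f τ a)⁻¹) (MulAut.conj (f τ a * a⁻¹)) hpt
    refine ⟨σ, ?_, hgσ⟩
    rw [hh σ, hgσ, hfσ, ← map_mul]
    have : a * (f τ a)⁻¹ * (f τ a * a⁻¹) = 1 := by group
    rw [this, map_one]
  have L2 : ∀ (τ a : G), ∃ μ, f μ = 1 ∧ g μ = h τ a * a⁻¹ := by
    intro τ a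
    have hcN : (rho G (g τ) * MulAut.toPerm G (f τ)) *
        (rho G a * (rho G (g τ) * MulAut.toPerm G (f τ))⁻¹ * (rho G a)⁻¹) ∈ N :=
      N.mul_mem (hnmem τ) (hNnorm _ (rhoHol a) _ (N.inv_mem (hnmem τ)))
    have hpt : ∀ x, ((rho G (g τ) * MulAut.toPerm G (f τ)) *
        (rho G a * (rho G (g τ) * MulAut.toPerm G (f τ))⁻¹ * (rho G a)⁻¹)) x
        = (1 : MulAut G) x * (h τ a * a⁻¹)⁻¹ := by
      intro x
      simp only [Equiv.Perm.mul_apply]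
      rw [rho_inv_app, n_inv_app, rho_app]
      show f τ ((f τ)⁻¹ (x * a * g τ) * a⁻¹) * (g τ)⁻¹ = _
      rw [hh τ]
      simp only [map_mul, map_inv, MulAut.apply_inv_self, MulAut.conj_apply, MulAut.mul_apply,
        MulAut.conj_inv_apply, MulAut.one_apply]
      group
    obtain ⟨μ, hgμ, hfμ⟩ := extract _ hcN (h τ a * a⁻¹) 1 hpt
    exact ⟨μ, hfμ, hgμ⟩
  -- cocycle facts
  have ginj : Function.Injective g := g.injective
  have gker : ∀ κ σ : G, h κ = 1 → g (κ * σ) = g σ * g κ := by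
    intro κ σ hκ
    have h1 : MulAut.conj (g κ) * f κ = 1 := by rw [← hh κ, hκ]
    have hfκ : f κ = (MulAut.conj (g κ))⁻¹ := (inv_eq_of_mul_eq_one_right h1).symm
    rw [hrel κ σ, hfκ, MulAut.conj_inv_apply]
    group
  -- commutation of f's and h's
  have hcommFH : ∀ σ τ : G, f τ * h σ = h σ * f τ := by
    intro σ τ
    obtain ⟨κ, hκ1, hκg⟩ := L1 τ (g σ)⁻¹
    obtain ⟨σ', hgσ', hfσ'⟩ := L3 (f τ) σ
    have hσ' : σ' = κ * σ := by
      apply ginj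
      rw [hgσ', gker κ σ hκ1, hκg, map_inv, inv_inv]
      group
    have hhσ' : h σ' = h σ := by rw [hσ', map_mul, hκ1, one_mul]
    have hX : h σ' = f τ * h σ * (f τ)⁻¹ := by
      rw [hh σ', hgσ', hfσ', hh σ]
      have hc : MulAut.conj (f τ (g σ)) = f τ * MulAut.conj (g σ) * (f τ)⁻¹ := by
        ext x
        simp only [MulAut.conj_apply, MulAut.mul_apply, map_mul, map_inv, MulAut.apply_inv_self]
      rw [hc]
      group
    have hkey : f τ * h σ * (f τ)⁻¹ = h σ := by rw [← hX, hhσ']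
    calc f τ * h σ = (f τ * h σ * (f τ)⁻¹) * f τ := by group
    _ = h σ * f τ := by rw [hkey]
  -- conjugation of fh by automorphisms
  have conjφ : ∀ (α : MulAut G) (σ : G), ∃ σ', f σ' * h σ' = α * (f σ * h σ) * α⁻¹ := by
    intro α σ
    obtain ⟨σ', hg', hf'⟩ := L3 α σ
    refine ⟨σ', ?_⟩
    have hh' : h σ' = α * h σ * α⁻¹ := by
      rw [hh σ', hg', hf', hh σ]
      have hc : MulAut.conj (α (g σ)) = α * MulAut.conj (g σ) * α⁻¹ := by
        ext x
        simp only [MulAut.conj_apply, MulAut.mul_apply, map_mul, map_inv, MulAut.apply_inv_self]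
      rw [hc]
      group
    rw [hf', hh']
    group
  -- triviality criterion from the center
  have conj_eq_one : ∀ b : G, MulAut.conj b = 1 → b = 1 := by
    intro b hb
    have hmemc : b ∈ Subgroup.center G := by
      rw [Subgroup.mem_center_iff]
      intro c
      have hc := congrArg (fun ψ : MulAut G => ψ c) hb
      simp only [MulAut.conj_apply, MulAut.one_apply] at hc
      calc c * b = (b * c * b⁻¹) * b := by rw [hc]
      _ = b * c := by group
    rwa [hZ, Subgroup.mem_bot] at hmemc
  -- the homomorphism φ
  obtain ⟨φ, hφ⟩ : ∃ φ : G →* MulAut G, ∀ σ, φ σ = f σ * h σ :=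
    ⟨MonoidHom.mk' (fun σ => f σ * h σ) (by
      intro σ τ
      have hcτ := hcommFH σ τ
      show f (σ * τ) * h (σ * τ) = (f σ * h σ) * (f τ * h τ)
      rw [map_mul, map_mul, mul_assoc, ← mul_assoc (f τ), hcτ]
      group), fun σ => rfl⟩
  -- injectivity
  have hφinj : Function.Injective φ := by
    rw [injective_iff_map_eq_one]
    intro σ hσ1
    rw [hφ σ] at hσ1
    have hinv : h σ = (f σ)⁻¹ := (inv_eq_of_mul_eq_one_right hσ1).symm
    have hfix : ∀ a : G, f σ a = a := by
      intro a
      obtain ⟨κ, hκh, hκg⟩ := L1 σ a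
      obtain ⟨μ, hμf, hμg⟩ := L2 σ (f σ a)
      have hμg' : g μ = a * (f σ a)⁻¹ := by
        rw [hμg, hinv, MulAut.inv_apply_self]
      have hκμ : κ = μ := ginj (by rw [hκg, hμg'])
      have e1 : MulAut.conj (g κ) * f κ = 1 := by rw [← hh κ, hκh]
      rw [hκμ, hμf, mul_one] at e1
      have hgκ1 : g μ = 1 := conj_eq_one _ e1
      have : a * (f σ a)⁻¹ = 1 := by rw [← hμg', hgκ1]
      have := mul_inv_eq_one.mp this
      exact this.symm
    have hf1 : f σ = 1 := by
      ext a
      rw [hfix a]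
      rfl
    have hh1 : h σ = 1 := by rw [hinv, hf1, inv_one]
    have e2 : MulAut.conj (g σ) = 1 := by
      have := hh σ
      rw [hh1, hf1, mul_one] at this
      exact this.symm
    have hgσ1 : g σ = 1 := conj_eq_one _ e2
    apply ginj
    rw [hgσ1, hg1]
  -- packaging
  refine ⟨φ.range, ?_, ?_, ?_⟩
  · ext x
    simp only [MonoidHom.coe_range, Set.mem_range]
    constructor
    · rintro ⟨σ, rfl⟩; exact ⟨σ, (hφ σ).symm⟩
    · rintro ⟨σ, hσ⟩; exact ⟨σ, by rw [hφ σ, hσ]⟩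
  · constructor
    intro n hn α
    obtain ⟨σ, hσ⟩ := hn
    obtain ⟨σ', hσ'⟩ := conjφ α σ
    refine ⟨σ', ?_⟩
    rw [hφ σ', hσ', ← hσ, hφ σ]
  · refine ⟨MonoidHom.ofInjective hφinj, ?_⟩
    intro σ
    rw [MonoidHom.ofInjective_apply, hφ σ]
end

section
/- In the setup (G centerless, f, h : G → Aut(G) with h(σ) = conj(g(σ))∘f(σ), g a bijection satisfying g(στ) = g(σ)·f(σ)(g(τ)), and N = {ρ(g(σ))∘f(σ) : σ ∈ G} a normal subgroup of Hol(G)), the following are equivalent: (d) {f(σ)h(σ) : σ ∈ G} = Inn(G); (e) the quotient G/(ker(f)·ker(h)) is elementary 2-abelian, i.e., σ² ∈ ker(f)·ker(h) for every σ ∈ G. -/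
/-- In the setup, `{f(σ)h(σ) : σ ∈ G} = Inn(G)` if and only if
`G/(ker(f)·ker(h))` is elementary `2`-abelian, i.e. `σ² ∈ ker(f)·ker(h)` for all
`σ ∈ G` (here `ker(f)·ker(h) = ker f ⊔ ker h` since both kernels are normal). -/
theorem fh_eq_inn_iff_elementary_two_abelian
    (G : Type*) [Group G] (hZ : Subgroup.center G = ⊥)
    (f h : G →* MulAut G) (g : Equiv.Perm G) (hg1 : g 1 = 1)
    (hrel : ∀ σ τ : G, g (σ * τ) = g σ * (f σ) (g τ))
    (hh : ∀ σ : G, h σ = MulAut.conj (g σ) * f σ)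
    (N : Subgroup (Equiv.Perm G))
    (hN : (N : Set (Equiv.Perm G))
      = {q | ∃ σ : G, q = rho G (g σ) * MulAut.toPerm G (f σ)})
    (hNle : N ≤ Hol G)
    (hNnorm : ∀ x ∈ Hol G, ∀ n ∈ N, x * n * x⁻¹ ∈ N)
    :
    (Set.range (fun σ : G => f σ * h σ)
        = ((MulAut.conj : G →* MulAut G).range : Set (MulAut G))) ↔
      ∀ σ : G, σ ^ 2 ∈ f.ker ⊔ h.ker := by
  classical
  -- basic application lemmas
  have lam_apply : ∀ s x : G, lambda G s x = s * x := fun _ _ => rfl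
  have rho_apply : ∀ s x : G, rho G s x = x * s⁻¹ := fun _ _ => rfl
  have toPerm_apply : ∀ (φ : MulAut G) (x : G), MulAut.toPerm G φ x = φ x := fun _ _ => rfl
  have n_apply : ∀ σ x : G,
      (rho G (g σ) * MulAut.toPerm G (f σ)) x = f σ x * (g σ)⁻¹ := fun _ _ => rfl
  have hh_apply : ∀ σ x : G, h σ x = g σ * f σ x * (g σ)⁻¹ := by
    intro σ x; rw [hh σ]; rfl
  have memN_iff : ∀ q : Equiv.Perm G,
      q ∈ N ↔ ∃ σ : G, q = rho G (g σ) * MulAut.toPerm G (f σ) := by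
    intro q
    constructor
    · intro hq
      have : q ∈ (N : Set (Equiv.Perm G)) := hq
      rw [hN] at this
      exact this
    · intro hq
      have : q ∈ (N : Set (Equiv.Perm G)) := by rw [hN]; exact hq
      exact this
  have n_mem : ∀ σ : G, rho G (g σ) * MulAut.toPerm G (f σ) ∈ N :=
    fun σ => (memN_iff _).mpr ⟨σ, rfl⟩
  -- Hol memberships
  have hol_lam : ∀ s : G, lambda G s ∈ Hol G := fun s => Subgroup.le_normalizer (H := (lambda G).range) ⟨s, rfl⟩
  have key_rho_lam : ∀ s t : G, rho G s * lambda G t * (rho G s)⁻¹ = lambda G t := by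
    intro s t
    rw [← map_inv]
    ext x
    simp only [Equiv.Perm.mul_apply, lam_apply, rho_apply]
    group
  have hol_rho : ∀ s : G, rho G s ∈ Hol G := by
    intro s
    rw [Hol, Subgroup.mem_normalizer_iff]
    intro p
    constructor
    · rintro ⟨t, rfl⟩
      exact ⟨t, (key_rho_lam s t).symm⟩
    · rintro ⟨t, ht⟩
      refine ⟨t, ?_⟩
      have h3 := key_rho_lam s⁻¹ t
      rw [map_inv] at h3
      calc lambda G t = (rho G s)⁻¹ * lambda G t * ((rho G s)⁻¹)⁻¹ := h3.symm
        _ = (rho G s)⁻¹ * (rho G s * p * (rho G s)⁻¹) * ((rho G s)⁻¹)⁻¹ := by rw [ht]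
        _ = p := by group
  have key_perm_lam : ∀ (φ : MulAut G) (t : G),
      MulAut.toPerm G φ * lambda G t * (MulAut.toPerm G φ)⁻¹ = lambda G (φ t) := by
    intro φ t
    rw [← map_inv]
    ext x
    simp only [Equiv.Perm.mul_apply, lam_apply, toPerm_apply]
    rw [map_mul]
    simp
  have hol_perm : ∀ φ : MulAut G, MulAut.toPerm G φ ∈ Hol G := by
    intro φ
    rw [Hol, Subgroup.mem_normalizer_iff]
    intro p
    constructor
    · rintro ⟨t, rfl⟩
      exact ⟨φ t, (key_perm_lam φ t).symm⟩
    · rintro ⟨t, ht⟩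
      refine ⟨φ⁻¹ t, ?_⟩
      have h3 := key_perm_lam φ⁻¹ t
      rw [map_inv] at h3
      calc lambda G (φ⁻¹ t)
          = (MulAut.toPerm G φ)⁻¹ * lambda G t * ((MulAut.toPerm G φ)⁻¹)⁻¹ := h3.symm
        _ = (MulAut.toPerm G φ)⁻¹ * (MulAut.toPerm G φ * p * (MulAut.toPerm G φ)⁻¹)
              * ((MulAut.toPerm G φ)⁻¹)⁻¹ := by rw [ht]
        _ = p := by group
  -- extraction lemmas
  have ex_lam : ∀ y : G, lambda G y ∈ N → ∃ b : G, h b = 1 ∧ g b = y⁻¹ := by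
    intro y hy
    obtain ⟨b, hb⟩ := (memN_iff _).mp hy
    have h1 : y = (g b)⁻¹ := by
      have h2 := congrArg (fun p : Equiv.Perm G => p 1) hb
      simp only [lam_apply, n_apply, map_one, one_mul, mul_one] at h2
      exact h2
    have hfb : ∀ z : G, f b z = (g b)⁻¹ * z * g b := by
      intro z
      have h2 := congrArg (fun p : Equiv.Perm G => p z) hb
      simp only [lam_apply, n_apply] at h2
      rw [h1] at h2
      calc f b z = f b z * (g b)⁻¹ * g b := by group
        _ = (g b)⁻¹ * z * g b := by rw [← h2]
    have hhb : h b = 1 := by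
      ext z
      simp only [MulAut.one_apply]
      rw [hh_apply b z, hfb z]
      group
    exact ⟨b, hhb, by rw [h1, inv_inv]⟩
  have ex_rho : ∀ y : G, rho G y ∈ N → ∃ a : G, f a = 1 ∧ g a = y := by
    intro y hy
    obtain ⟨a, ha⟩ := (memN_iff _).mp hy
    have h1 : g a = y := by
      have h2 := congrArg (fun p : Equiv.Perm G => p 1) ha
      simp only [rho_apply, n_apply, map_one, one_mul, mul_one] at h2
      exact (inv_injective h2).symm
    have hfa : f a = 1 := by
      ext z
      simp only [MulAut.one_apply]
      have h2 := congrArg (fun p : Equiv.Perm G => p z) ha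
      simp only [rho_apply, n_apply, h1] at h2
      exact mul_right_cancel h2.symm
    exact ⟨a, hfa, h1⟩
  -- pointwise value of f on ker h
  have fap_of_hker : ∀ b : G, h b = 1 → ∀ z : G, f b z = (g b)⁻¹ * z * g b := by
    intro b hb1 z
    have h2 := hh_apply b z
    rw [hb1] at h2
    simp only [MulAut.one_apply] at h2
    calc f b z = (g b)⁻¹ * (g b * f b z * (g b)⁻¹) * g b := by group
      _ = (g b)⁻¹ * z * g b := by rw [← h2]
  -- membership builders
  have mem_lam_of : ∀ b : G, h b = 1 → lambda G ((g b)⁻¹) ∈ N := by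
    intro b hb1
    have h2 : lambda G ((g b)⁻¹) = rho G (g b) * MulAut.toPerm G (f b) := by
      ext z
      rw [lam_apply, n_apply, fap_of_hker b hb1 z]
      group
    rw [h2]
    exact n_mem b
  have mem_rho_of : ∀ a : G, f a = 1 → rho G (g a) ∈ N := by
    intro a ha1
    have h2 : rho G (g a) = rho G (g a) * MulAut.toPerm G (f a) := by
      rw [ha1, map_one, mul_one]
    rw [h2]
    exact n_mem a
  -- closure properties
  have PL_conj : ∀ x : G, (∃ b, h b = 1 ∧ g b = x) →
      ∀ s : G, ∃ b, h b = 1 ∧ g b = s * x * s⁻¹ := by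
    rintro x ⟨b, hb1, rfl⟩ s
    have h1 : lambda G s * lambda G ((g b)⁻¹) * (lambda G s)⁻¹ ∈ N :=
      hNnorm _ (hol_lam s) _ (mem_lam_of b hb1)
    have h3 : lambda G (s * (g b)⁻¹ * s⁻¹) = lambda G s * lambda G ((g b)⁻¹) * (lambda G s)⁻¹ := by
      simp only [map_mul, map_inv]
    rw [← h3] at h1
    obtain ⟨b', hb'1, hb'2⟩ := ex_lam _ h1
    refine ⟨b', hb'1, ?_⟩
    rw [hb'2]
    group
  have PL_inv : ∀ x : G, (∃ b, h b = 1 ∧ g b = x) → ∃ b, h b = 1 ∧ g b = x⁻¹ := by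
    rintro x ⟨b, hb1, rfl⟩
    have h2 : lambda G (g b) ∈ N := by
      have h3 : lambda G (g b) = (lambda G ((g b)⁻¹))⁻¹ := by rw [← map_inv, inv_inv]
      rw [h3]
      exact inv_mem (mem_lam_of b hb1)
    exact ex_lam _ h2
  have PL_mul : ∀ x y : G, (∃ b, h b = 1 ∧ g b = x) → (∃ b, h b = 1 ∧ g b = y) →
      ∃ b, h b = 1 ∧ g b = x * y := by
    rintro x y ⟨b1, hb1, rfl⟩ ⟨b2, hb2, rfl⟩
    refine ⟨b2 * b1, by rw [map_mul, hb1, hb2, mul_one], ?_⟩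
    rw [hrel, fap_of_hker b2 hb2 (g b1)]
    group
  have PK_inv : ∀ x : G, (∃ a, f a = 1 ∧ g a = x) → ∃ a, f a = 1 ∧ g a = x⁻¹ := by
    rintro x ⟨a, ha1, rfl⟩
    refine ⟨a⁻¹, by rw [map_inv, ha1, inv_one], ?_⟩
    have h2 := hrel a a⁻¹
    rw [mul_inv_cancel, hg1, ha1] at h2
    simp only [MulAut.one_apply] at h2
    exact eq_inv_of_mul_eq_one_right h2.symm
  have PK_conj : ∀ x : G, (∃ a, f a = 1 ∧ g a = x) →
      ∀ s : G, ∃ a, f a = 1 ∧ g a = s * x * s⁻¹ := by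
    rintro x ⟨a, ha1, rfl⟩ s
    have h1 : rho G s * rho G (g a) * (rho G s)⁻¹ ∈ N :=
      hNnorm _ (hol_rho s) _ (mem_rho_of a ha1)
    have h3 : rho G (s * g a * s⁻¹) = rho G s * rho G (g a) * (rho G s)⁻¹ := by
      simp only [map_mul, map_inv]
    rw [← h3] at h1
    exact ex_rho _ h1
  -- the pinching lemma
  have pinch : ∀ x : G, (∃ b, h b = 1 ∧ g b = x) → (∃ a, f a = 1 ∧ g a = x) → x = 1 := by
    rintro x ⟨b, hb1, rfl⟩ ⟨a, ha1, ha2⟩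
    have hab : a = b := g.injective ha2
    have hb1' : f b = 1 := by rw [← hab]; exact ha1
    have hc : g b ∈ Subgroup.center G := by
      rw [Subgroup.mem_center_iff]
      intro z
      have h2 := hh_apply b z
      rw [hb1, hb1'] at h2
      simp only [MulAut.one_apply] at h2
      calc z * g b = (g b * z * (g b)⁻¹) * g b := by rw [← h2]
        _ = g b * z := by group
    rw [hZ, Subgroup.mem_bot] at hc
    exact hc
  have lam_inv_apply : ∀ s x : G, (lambda G s)⁻¹ x = s⁻¹ * x := by
    intro s x; rw [← map_inv]; rfl
  have rho_inv_apply : ∀ s x : G, (rho G s)⁻¹ x = x * s := by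
    intro s x; rw [← map_inv, rho_apply, inv_inv]
  -- F1 : the values f μ z · z⁻¹ lie in g(ker h)
  have F1 : ∀ μ z : G, ∃ b, h b = 1 ∧ g b = f μ z * z⁻¹ := by
    intro μ z
    have key : lambda G (z * (f μ z)⁻¹)
        = lambda G z * (rho G (g μ) * MulAut.toPerm G (f μ)) * (lambda G z)⁻¹
          * (rho G (g μ) * MulAut.toPerm G (f μ))⁻¹ := by
      rw [eq_mul_inv_iff_mul_eq]
      ext x
      simp only [Equiv.Perm.mul_apply, n_apply, lam_apply, lam_inv_apply]
      rw [map_mul, map_inv]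
      group
    have hyN : lambda G (z * (f μ z)⁻¹) ∈ N := by
      rw [key]
      exact mul_mem (hNnorm _ (hol_lam z) _ (n_mem μ)) (inv_mem (n_mem μ))
    obtain ⟨b, hb1, hb2⟩ := ex_lam _ hyN
    refine ⟨b, hb1, ?_⟩
    rw [hb2]
    group
  -- F2 : the values h μ z · z⁻¹ lie in g(ker f)
  have F2 : ∀ μ z : G, ∃ a, f a = 1 ∧ g a = h μ z * z⁻¹ := by
    intro μ z
    have key : rho G (z * (h μ z)⁻¹)
        = rho G z * (rho G (g μ) * MulAut.toPerm G (f μ)) * (rho G z)⁻¹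
          * (rho G (g μ) * MulAut.toPerm G (f μ))⁻¹ := by
      rw [eq_mul_inv_iff_mul_eq]
      ext x
      simp only [Equiv.Perm.mul_apply, n_apply, rho_apply, rho_inv_apply]
      rw [hh_apply, map_mul]
      group
    have hyN : rho G (z * (h μ z)⁻¹) ∈ N := by
      rw [key]
      exact mul_mem (hNnorm _ (hol_rho z) _ (n_mem μ)) (inv_mem (n_mem μ))
    obtain ⟨a, ha1, ha2⟩ := ex_rho _ hyN
    obtain ⟨a', ha'1, ha'2⟩ := PK_inv _ ⟨a, ha1, ha2⟩
    refine ⟨a', ha'1, ?_⟩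
    rw [ha'2]
    group
  -- conjugation sandwich in MulAut
  have conj_sand : ∀ (φ : MulAut G) (y : G),
      φ * MulAut.conj y * φ⁻¹ = MulAut.conj (φ y) := by
    intro φ y
    ext x
    simp only [MulAut.mul_apply, MulAut.conj_apply, map_mul, map_inv,
      MulAut.apply_inv_self]
  -- decomposition of elements of ker f ⊔ ker h
  have decomp : ∀ σ : G, σ ^ 2 ∈ f.ker ⊔ h.ker →
      ∃ a ∈ f.ker, ∃ b ∈ h.ker, a * b = σ ^ 2 := by
    intro σ hs
    have h2 : σ ^ 2 ∈ (↑(f.ker ⊔ h.ker) : Set G) := hs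
    rw [Subgroup.mul_normal] at h2
    exact h2
  constructor
  · -- (d) ⇒ (e)
    intro hEq σ
    have hmem : f σ * h σ ∈ ((MulAut.conj : G →* MulAut G).range : Set (MulAut G)) := by
      rw [← hEq]; exact ⟨σ, rfl⟩
    obtain ⟨c, hc⟩ := hmem
    have hsand := conj_sand (f σ) (g σ)
    have ID1 : f σ * h σ = MulAut.conj (f σ (g σ)) * (f σ * f σ) := by
      rw [hh σ, ← hsand]
      group
    have hfσσ : f (σ * σ) = MulAut.conj ((f σ (g σ))⁻¹ * c) := by
      have h5 : MulAut.conj (f σ (g σ)) * f (σ * σ) = MulAut.conj c := by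
        rw [map_mul, ← ID1]
        exact hc.symm
      have h6 : f (σ * σ) = (MulAut.conj (f σ (g σ)))⁻¹ * MulAut.conj c := by
        rw [← h5]; group
      rw [h6, ← map_inv, ← map_mul]
    set w := (f σ (g σ))⁻¹ * c with hw
    have hgb : g (g.symm w) = w := g.apply_symm_apply w
    have hfσσ_apply : ∀ z : G, f (σ * σ) z = w * z * w⁻¹ := by
      intro z; rw [hfσσ, MulAut.conj_apply]
    have hhb : h (g.symm w) = 1 := by
      ext z
      simp only [MulAut.one_apply]
      have hPL : ∃ b', h b' = 1 ∧ g b' = h (g.symm w) z * z⁻¹ := by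
        obtain ⟨b0, hb01, hb02⟩ := F1 (g.symm w) z
        have hl := PL_conj _ ⟨b0, hb01, hb02⟩ z⁻¹
        have hA : ∃ b, h b = 1 ∧ g b = w * z * w⁻¹ * z⁻¹ := by
          obtain ⟨b1, h1, h2⟩ := F1 (σ * σ) z
          rw [hfσσ_apply z] at h2
          exact ⟨b1, h1, h2⟩
        have hB := PL_conj _ (PL_conj _ hl w) z
        have hprod := PL_mul _ _ hA hB
        obtain ⟨bp, hbp1, hbp2⟩ := hprod
        refine ⟨bp, hbp1, ?_⟩
        rw [hbp2, hh_apply (g.symm w) z, hgb]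
        group
      have hPK := F2 (g.symm w) z
      have h9 := pinch _ hPL hPK
      rwa [mul_inv_eq_one] at h9
    have hfb : f (g.symm w) = (MulAut.conj w)⁻¹ := by
      have h10 := hh (g.symm w)
      rw [hhb, hgb] at h10
      exact (inv_eq_of_mul_eq_one_right h10.symm).symm
    have ha : f (σ ^ 2 * g.symm w) = 1 := by
      rw [map_mul, pow_two, hfσσ, hfb, mul_inv_cancel]
    have final : σ ^ 2 = (σ ^ 2 * g.symm w) * (g.symm w)⁻¹ := by group
    rw [final]
    exact mul_mem (Subgroup.mem_sup_left (MonoidHom.mem_ker.mpr ha))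
      (Subgroup.mem_sup_right (inv_mem (MonoidHom.mem_ker.mpr hhb)))
  · -- (e) ⇒ (d)
    intro hKL
    apply Set.Subset.antisymm
    · rintro ψ ⟨σ, rfl⟩
      obtain ⟨a, ha, b, hb, hab⟩ := decomp σ (hKL σ)
      have hb1 : h b = 1 := MonoidHom.mem_ker.mp hb
      have hfb : f b = (MulAut.conj (g b))⁻¹ := by
        have h10 := hh b
        rw [hb1] at h10
        exact (inv_eq_of_mul_eq_one_right h10.symm).symm
      have hff : f σ * f σ = (MulAut.conj (g b))⁻¹ := by
        rw [← map_mul, ← pow_two, ← hab, map_mul, MonoidHom.mem_ker.mp ha, one_mul, hfb]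
      have hval : MulAut.conj (f σ (g σ) * (g b)⁻¹) = f σ * h σ := by
        rw [map_mul, map_inv, ← hff, hh σ, ← conj_sand (f σ) (g σ)]
        group
      exact ⟨f σ (g σ) * (g b)⁻¹, hval⟩
    · rintro ψ ⟨τ, hτ⟩
      obtain ⟨a, ha, b, hb, hab⟩ := decomp (g.symm τ) (hKL (g.symm τ))
      have hgν : g (g.symm τ) = τ := g.apply_symm_apply τ
      have hb1 : h b = 1 := MonoidHom.mem_ker.mp hb
      have hfb2 : f b = f (g.symm τ) * f (g.symm τ) := by
        have h1 : f (g.symm τ) * f (g.symm τ) = f b := by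
          rw [← map_mul, ← pow_two, ← hab, map_mul, MonoidHom.mem_ker.mp ha, one_mul]
        exact h1.symm
      have hfσ₁ : f (b⁻¹ * g.symm τ) = (f (g.symm τ))⁻¹ := by
        rw [map_mul, map_inv, hfb2]
        group
      have hhσ₁ : h (b⁻¹ * g.symm τ) = h (g.symm τ) := by
        rw [map_mul, map_inv, hb1]
        simp
      have hq : MulAut.toPerm G (f (g.symm τ))
            * (rho G (g (b⁻¹ * g.symm τ)) * MulAut.toPerm G (f (b⁻¹ * g.symm τ)))
            * (MulAut.toPerm G (f (g.symm τ)))⁻¹ ∈ N :=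
        hNnorm _ (hol_perm (f (g.symm τ))) _ (n_mem _)
      obtain ⟨σ₂, hσ₂⟩ := (memN_iff _).mp hq
      have toPerm_inv_apply : ∀ (φ : MulAut G) (x : G),
          (MulAut.toPerm G φ)⁻¹ x = φ⁻¹ x := by
        intro φ x; rw [← map_inv]; rfl
      have hpt : ∀ x : G,
          f (g.symm τ) (f (b⁻¹ * g.symm τ) ((f (g.symm τ))⁻¹ x))
            * (f (g.symm τ) (g (b⁻¹ * g.symm τ)))⁻¹ = f σ₂ x * (g σ₂)⁻¹ := by
        intro x
        have h2 := congrArg (fun p : Equiv.Perm G => p x) hσ₂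
        simp only [Equiv.Perm.mul_apply, n_apply, toPerm_apply, toPerm_inv_apply] at h2
        rw [map_mul, map_inv] at h2
        exact h2
      have hg2 : g σ₂ = f (g.symm τ) (g (b⁻¹ * g.symm τ)) := by
        have h2 := hpt 1
        simp only [map_one, one_mul] at h2
        exact (inv_injective h2).symm
      have hf2 : f σ₂ = f (g.symm τ) * f (b⁻¹ * g.symm τ) * (f (g.symm τ))⁻¹ := by
        ext x
        have h2 := hpt x
        rw [hg2] at h2
        have h3 := mul_right_cancel h2
        rw [MulAut.mul_apply, MulAut.mul_apply]
        exact h3.symm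
      refine ⟨σ₂, ?_⟩
      show f σ₂ * h σ₂ = ψ
      have hmain : f σ₂ * h σ₂ = MulAut.conj (g (g.symm τ)) := by
        rw [hh σ₂, hf2, hg2, ← conj_sand (f (g.symm τ)) (g (b⁻¹ * g.symm τ))]
        have hcore : f (b⁻¹ * g.symm τ) * (MulAut.conj (g (b⁻¹ * g.symm τ)) * f (b⁻¹ * g.symm τ))
            = (f (g.symm τ))⁻¹ * h (g.symm τ) := by
          rw [← hh (b⁻¹ * g.symm τ), hfσ₁, hhσ₁]
        have hexp : h (g.symm τ) = MulAut.conj (g (g.symm τ)) * f (g.symm τ) := hh _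
        calc f (g.symm τ) * f (b⁻¹ * g.symm τ) * (f (g.symm τ))⁻¹
              * (f (g.symm τ) * MulAut.conj (g (b⁻¹ * g.symm τ)) * (f (g.symm τ))⁻¹
                * (f (g.symm τ) * f (b⁻¹ * g.symm τ) * (f (g.symm τ))⁻¹))
            = f (g.symm τ)
                * (f (b⁻¹ * g.symm τ) * (MulAut.conj (g (b⁻¹ * g.symm τ)) * f (b⁻¹ * g.symm τ)))
                * (f (g.symm τ))⁻¹ := by group
          _ = f (g.symm τ) * ((f (g.symm τ))⁻¹ * h (g.symm τ)) * (f (g.symm τ))⁻¹ := by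
                rw [hcore]
          _ = MulAut.conj (g (g.symm τ)) := by rw [hexp]; group
      rw [hmain, hgν]
      exact hτ
end
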